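/- For integers m ≥ 0, n ≥ 1 and any parameter μ ∈ ℝ, the generalised Laguerre polynomial has the discrete symmetry T_{m,n}^{(μ)}(z) = (−1)^{⌊(m+n+1)/2⌋} · T_{n−1, m+1}^{(−μ−2n−2m−2)}(−z). -/

import Mathlib

noncomputable section

open Finset

/-- Generalized binomial coefficient `C(x, k)` for real `x`. -/
def genBinom (x : ℝ) (k : ℕ) : ℝ :=
  (∏ i ∈ Finset.range k, (x - i)) / (Nat.factorial k)

/-- Associated Laguerre polynomial `L_n^{(α)}(z)`, with the convention `L_n^{(α)} = 0` for `n < 0`. -/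
def lagL (n : ℤ) (α : ℝ) : ℝ → ℝ := fun z =>
  if n < 0 then 0
  else ∑ k ∈ Finset.range (n.toNat + 1),
    (-1 : ℝ) ^ k * genBinom ((n : ℝ) + α) (n.toNat - k) * z ^ k / (Nat.factorial k)

lemma genBinom_zero (x : ℝ) : genBinom x 0 = 1 := by
  simp [genBinom]

lemma genBinom_absorb (x : ℝ) (k : ℕ) :
    (k + 1 : ℝ) * genBinom x (k + 1) = (x - k) * genBinom x k := by
  unfold genBinom
  rw [Finset.prod_range_succ, Nat.factorial_succ]
  push_cast
  have h1 : (k.factorial : ℝ) ≠ 0 := by positivity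
  field_simp

lemma genBinom_zero_left {k : ℕ} (hk : 0 < k) : genBinom 0 k = 0 := by
  unfold genBinom
  rw [Finset.prod_eq_zero (Finset.mem_range.2 hk)] <;> simp

lemma genBinom_vandermonde (x y : ℝ) (n : ℕ) :
    ∑ i ∈ Finset.range (n + 1), genBinom x i * genBinom y (n - i) = genBinom (x + y) n := by
  induction n with
  | zero => simp [genBinom_zero]
  | succ n ih =>
    have hne : (n + 1 : ℝ) ≠ 0 := by positivity
    apply mul_left_cancel₀ hne
    have key : (n + 1 : ℝ) * ∑ i ∈ Finset.range (n + 2), genBinom x i * genBinom y (n + 1 - i)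
        = (x + y - n) * ∑ i ∈ Finset.range (n + 1), genBinom x i * genBinom y (n - i) := by
      rw [Finset.mul_sum]
      have expand : ∀ i ∈ Finset.range (n + 2),
          (n + 1 : ℝ) * (genBinom x i * genBinom y (n + 1 - i))
            = (i : ℝ) * genBinom x i * genBinom y (n + 1 - i)
              + genBinom x i * (((n + 1 - i : ℕ) : ℝ) * genBinom y (n + 1 - i)) := by
        intro i hi
        have hi' : i ≤ n + 1 := by simpa [Nat.lt_succ_iff] using Finset.mem_range.1 hi
        have : ((n + 1 - i : ℕ) : ℝ) = (n : ℝ) + 1 - i := by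
          push_cast [Nat.cast_sub hi']; ring
        rw [this]; ring
      rw [Finset.sum_congr rfl expand, Finset.sum_add_distrib]
      -- first sum
      have h1 : ∑ i ∈ Finset.range (n + 2), (i : ℝ) * genBinom x i * genBinom y (n + 1 - i)
          = ∑ i ∈ Finset.range (n + 1), (x - i) * genBinom x i * genBinom y (n - i) := by
        rw [Finset.sum_range_succ']
        simp only [Nat.cast_zero, zero_mul]
        rw [add_zero]
        refine Finset.sum_congr rfl fun i hi => ?_
        have : ((i + 1 : ℕ) : ℝ) * genBinom x (i + 1) = (x - i) * genBinom x i := by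
          push_cast; exact genBinom_absorb x i
        have hsub : n + 1 - (i + 1) = n - i := by omega
        calc ((i+1:ℕ):ℝ) * genBinom x (i+1) * genBinom y (n + 1 - (i+1))
            = (((i+1:ℕ)):ℝ) * genBinom x (i+1) * genBinom y (n - i) := by
              rw [hsub]
          _ = (x - i) * genBinom x i * genBinom y (n - i) := by rw [this]
      -- second sum
      have h2 : ∑ i ∈ Finset.range (n + 2),
            genBinom x i * (((n + 1 - i : ℕ) : ℝ) * genBinom y (n + 1 - i))
          = ∑ i ∈ Finset.range (n + 1), genBinom x i * ((y - (n - i : ℕ)) * genBinom y (n - i)) := by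
        rw [Finset.sum_range_succ]
        simp only [Nat.sub_self, Nat.cast_zero, zero_mul, mul_zero, add_zero]
        refine Finset.sum_congr rfl fun i hi => ?_
        have hi' : i ≤ n := by simpa [Nat.lt_succ_iff] using Finset.mem_range.1 hi
        have hsub : n + 1 - i = (n - i) + 1 := by omega
        rw [hsub]
        congr 1
        have := genBinom_absorb y (n - i)
        push_cast at this ⊢
        try rw [this]
      rw [h1, h2, ← Finset.sum_add_distrib, Finset.mul_sum]
      refine Finset.sum_congr rfl fun i hi => ?_
      have hi' : i ≤ n := by simpa [Nat.lt_succ_iff] using Finset.mem_range.1 hi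
      have : ((n - i : ℕ) : ℝ) = (n : ℝ) - i := by push_cast [Nat.cast_sub hi']; ring
      rw [this]; ring
    rw [key, ih]
    exact (genBinom_absorb (x + y) n).symm

lemma lagL_neg {n : ℤ} (hn : n < 0) (α : ℝ) : lagL n α = fun _ => 0 := by
  funext z; simp [lagL, hn]

lemma lagL_coe (n : ℕ) (α : ℝ) (z : ℝ) :
    lagL n α z = ∑ k ∈ Finset.range (n + 1),
      (-1 : ℝ) ^ k * genBinom ((n : ℝ) + α) (n - k) * z ^ k / (Nat.factorial k) := by
  have h : ¬ ((n : ℤ) < 0) := by simp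
  simp [lagL, h, Int.toNat_natCast]

lemma lagL_apply_zero (n : ℕ) (α : ℝ) : lagL n α 0 = genBinom ((n : ℝ) + α) n := by
  rw [lagL_coe]
  rw [Finset.sum_eq_single 0]
  · simp
  · intro k hk hk0
    simp [zero_pow hk0]
  · intro h; simp at h

lemma lagL_hasDerivAt (n : ℤ) (α : ℝ) (z : ℝ) :
    HasDerivAt (lagL n α) (-(lagL (n - 1) (α + 1) z)) z := by
  rcases lt_or_ge n 0 with hn | hn
  · have h1 : lagL n α = fun _ => 0 := lagL_neg hn α
    have h2 : lagL (n - 1) (α + 1) = fun _ => 0 := lagL_neg (by omega) (α + 1)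
    rw [h1, h2]
    simpa using hasDerivAt_const z (0 : ℝ)
  · obtain ⟨m, rfl⟩ : ∃ m : ℕ, n = (m : ℤ) := ⟨n.toNat, (Int.toNat_of_nonneg hn).symm⟩
    have hfun : lagL (m : ℤ) α = fun z => ∑ k ∈ Finset.range (m + 1),
        (-1 : ℝ) ^ k * genBinom ((m : ℝ) + α) (m - k) * z ^ k / (Nat.factorial k) := by
      funext w; exact lagL_coe m α w
    rw [hfun]
    have hterm : ∀ k ∈ Finset.range (m + 1), HasDerivAt
        (fun z : ℝ => (-1 : ℝ) ^ k * genBinom ((m : ℝ) + α) (m - k) * z ^ k / (Nat.factorial k))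
        ((-1 : ℝ) ^ k * genBinom ((m : ℝ) + α) (m - k) * (k * z ^ (k - 1)) / (Nat.factorial k)) z := by
      intro k _
      have h := (hasDerivAt_pow k z).const_mul ((-1 : ℝ) ^ k * genBinom ((m : ℝ) + α) (m - k))
      have h2 := h.div_const (Nat.factorial k : ℝ)
      convert h2 using 1
    have hsum := HasDerivAt.fun_sum hterm
    refine hsum.congr_deriv (Eq.symm ?_)
    -- show -(lagL (m-1) (α+1) z) = ∑ derivative terms
    rcases Nat.eq_zero_or_pos m with rfl | hm
    · have h0 : ((0:ℕ) : ℤ) - 1 < 0 := by norm_num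
      rw [lagL_neg h0]
      simp
    · obtain ⟨p, rfl⟩ : ∃ p : ℕ, m = p + 1 := ⟨m - 1, by omega⟩
      have hcast : ((p + 1 : ℕ) : ℤ) - 1 = (p : ℤ) := by push_cast; ring
      rw [hcast, lagL_coe]
      conv_rhs => rw [Finset.sum_range_succ']
      simp only [Nat.cast_zero, zero_mul, mul_zero, zero_div, add_zero]
      rw [← Finset.sum_neg_distrib]
      refine Finset.sum_congr rfl fun k hk => ?_
      have hk' : k ≤ p := by simpa [Nat.lt_succ_iff] using Finset.mem_range.1 hk
      have hfac : ((k + 1).factorial : ℝ) = (k + 1) * k.factorial := by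
        rw [Nat.factorial_succ]; push_cast; ring
      have hsub : p + 1 - (k + 1) = p - k := by omega
      have hpar : ((p : ℝ) + (α + 1)) = ((p + 1 : ℕ) : ℝ) + α := by push_cast; ring
      rw [hpar, ← hsub]
      have hkfac : (k.factorial : ℝ) ≠ 0 := by positivity
      have hkfac1 : ((k+1).factorial : ℝ) ≠ 0 := by positivity
      field_simp [hfac]
      simp only [Nat.add_sub_cancel, hfac, Nat.cast_add, Nat.cast_one]
      ring

lemma lagL_differentiable (n : ℤ) (α : ℝ) : Differentiable ℝ (lagL n α) :=
  fun z => (lagL_hasDerivAt n α z).differentiableAt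

lemma iteratedDeriv_lagL (s : ℕ) (n : ℤ) (α : ℝ) :
    iteratedDeriv s (lagL n α) = fun z => (-1 : ℝ) ^ s * lagL (n - s) (α + s) z := by
  induction s with
  | zero => simp [iteratedDeriv_zero]
  | succ s ih =>
    rw [iteratedDeriv_succ, ih]
    funext z
    have h : HasDerivAt (fun w => (-1 : ℝ) ^ s * lagL (n - s) (α + s) w)
        ((-1 : ℝ) ^ s * -(lagL (n - s - 1) (α + s + 1) z)) z :=
      (lagL_hasDerivAt (n - s) (α + s) z).const_mul _
    rw [h.deriv]
    have h1 : n - (s : ℤ) - 1 = n - ((s + 1 : ℕ) : ℤ) := by push_cast; ring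
    have h2 : α + (s : ℝ) + 1 = α + ((s + 1 : ℕ) : ℝ) := by push_cast; ring
    rw [h1, h2]
    ring

lemma lag_conv (α z : ℝ) (t : ℕ) :
    ∑ i ∈ Finset.range (t + 1),
      lagL i (α - i) z * lagL ((t - i : ℕ) : ℤ) (-α - ((t - i : ℕ) : ℝ)) (-z)
      = if t = 0 then 1 else 0 := by
  set F : ℝ → ℝ := fun w => ∑ i ∈ Finset.range (t + 1),
      lagL i (α - i) w * lagL ((t - i : ℕ) : ℤ) (-α - ((t - i : ℕ) : ℝ)) (-w) with hF
  have hderiv : ∀ w : ℝ, HasDerivAt F 0 w := by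
    intro w
    have hterm : ∀ i ∈ Finset.range (t + 1), HasDerivAt
        (fun w => lagL i (α - i) w * lagL ((t - i : ℕ) : ℤ) (-α - ((t - i : ℕ) : ℝ)) (-w))
        (-(lagL ((i : ℤ) - 1) ((α - i) + 1) w) * lagL ((t - i : ℕ) : ℤ) (-α - ((t - i : ℕ) : ℝ)) (-w)
          + lagL i (α - i) w *
            (lagL (((t - i : ℕ) : ℤ) - 1) ((-α - ((t - i : ℕ) : ℝ)) + 1) (-w))) w := by
      intro i _
      have h1 := lagL_hasDerivAt i (α - i) w
      have h2 : HasDerivAt (fun w : ℝ => lagL ((t - i : ℕ) : ℤ) (-α - ((t - i : ℕ) : ℝ)) (-w))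
          (lagL (((t - i : ℕ) : ℤ) - 1) ((-α - ((t - i : ℕ) : ℝ)) + 1) (-w)) w := by
        have hneg : HasDerivAt (fun w : ℝ => -w) (-1) w := (hasDerivAt_id w).neg
        have := (lagL_hasDerivAt ((t - i : ℕ) : ℤ) (-α - ((t - i : ℕ) : ℝ)) (-w)).comp w hneg
        refine this.congr_deriv (Eq.symm ?_)
        ring
      exact h1.mul h2
    have hsum := HasDerivAt.fun_sum hterm
    refine hsum.congr_deriv (Eq.symm ?_)
    rw [Finset.sum_add_distrib]
    have hA : ∑ i ∈ Finset.range (t + 1),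
        -(lagL ((i : ℤ) - 1) ((α - i) + 1) w) * lagL ((t - i : ℕ) : ℤ) (-α - ((t - i : ℕ) : ℝ)) (-w)
        = -∑ i ∈ Finset.range t,
            lagL i (α - i) w * lagL ((t - 1 - i : ℕ) : ℤ) (-α - ((t - 1 - i : ℕ) : ℝ)) (-w) := by
      rw [Finset.sum_range_succ']
      have h0 : lagL (((0:ℕ) : ℤ) - 1) ((α - (0:ℕ)) + 1) = fun _ => 0 := lagL_neg (by norm_num) _
      rw [h0]
      simp only [neg_zero, zero_mul, add_zero]
      rw [← Finset.sum_neg_distrib]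
      refine Finset.sum_congr rfl fun i hi => ?_
      have hi' : i < t := Finset.mem_range.1 hi
      have e1 : ((i + 1 : ℕ) : ℤ) - 1 = (i : ℤ) := by push_cast; ring
      have e2 : (α - ((i + 1 : ℕ) : ℝ)) + 1 = α - i := by push_cast; ring
      have e3 : (t - (i + 1) : ℕ) = (t - 1 - i : ℕ) := by omega
      rw [e1, e2, e3]
      ring
    have hB : ∑ i ∈ Finset.range (t + 1),
        lagL i (α - i) w * (lagL (((t - i : ℕ) : ℤ) - 1) ((-α - ((t - i : ℕ) : ℝ)) + 1) (-w))
        = ∑ i ∈ Finset.range t,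
            lagL i (α - i) w * lagL ((t - 1 - i : ℕ) : ℤ) (-α - ((t - 1 - i : ℕ) : ℝ)) (-w) := by
      rw [Finset.sum_range_succ]
      have h0 : lagL (((t - t : ℕ) : ℤ) - 1) ((-α - ((t - t : ℕ) : ℝ)) + 1) = fun _ => 0 :=
        lagL_neg (by simp) _
      rw [h0]
      simp only [mul_zero, add_zero]
      refine Finset.sum_congr rfl fun i hi => ?_
      have hi' : i < t := Finset.mem_range.1 hi
      have e1 : ((t - i : ℕ) : ℤ) - 1 = ((t - 1 - i : ℕ) : ℤ) := by
        push_cast [Nat.cast_sub hi'.le, Nat.cast_sub (by omega : 1 + i ≤ t)]; push_cast; omega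
      have e2 : (-α - ((t - i : ℕ) : ℝ)) + 1 = -α - ((t - 1 - i : ℕ) : ℝ) := by
        have g1 : ((t - i : ℕ) : ℝ) = (t : ℝ) - i := by
          rw [Nat.cast_sub hi'.le]
        have g2 : ((t - 1 - i : ℕ) : ℝ) = (t : ℝ) - 1 - i := by
          have : t - 1 - i = t - (1 + i) := by omega
          rw [this, Nat.cast_sub (by omega : 1 + i ≤ t)]; push_cast; ring
        rw [g1, g2]; ring
      rw [e1, e2]
    rw [hA, hB]
    ring
  have hconst : F z = F 0 :=
    is_const_of_deriv_eq_zero (fun w => (hderiv w).differentiableAt)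
      (fun w => (hderiv w).deriv) z 0
  have hF0 : F 0 = if t = 0 then 1 else 0 := by
    rw [hF]
    simp only [neg_zero]
    have : ∀ i ∈ Finset.range (t + 1),
        lagL i (α - i) 0 * lagL ((t - i : ℕ) : ℤ) (-α - ((t - i : ℕ) : ℝ)) 0
          = genBinom α i * genBinom (-α) (t - i) := by
      intro i _
      rw [lagL_apply_zero, lagL_apply_zero]
      congr 1
      · congr 1; ring
      · congr 1; ring
    rw [Finset.sum_congr rfl this, genBinom_vandermonde α (-α) t]
    rcases Nat.eq_zero_or_pos t with rfl | ht
    · simp [genBinom_zero]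
    · rw [if_neg (by omega)]
      simpa using genBinom_zero_left ht
  have : F z = if t = 0 then 1 else 0 := by rw [hconst, hF0]
  exact this

lemma lag_conv_int (α z : ℝ) (lo hi T : ℤ) (hlo : lo ≤ 0) (hhi : T ≤ hi) :
    ∑ a ∈ Finset.Icc lo hi, lagL a (α - (a : ℝ)) z * lagL (T - a) (-α - ((T - a : ℤ) : ℝ)) (-z)
      = if T = 0 then 1 else 0 := by
  rcases lt_or_ge T 0 with hT | hT
  · rw [if_neg (by omega)]
    refine Finset.sum_eq_zero fun a _ => ?_
    rcases lt_or_ge a 0 with ha | ha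
    · rw [lagL_neg ha]; simp
    · rw [lagL_neg (show T - a < 0 by omega)]; simp
  · obtain ⟨t, rfl⟩ : ∃ t : ℕ, T = (t : ℤ) := ⟨T.toNat, (Int.toNat_of_nonneg hT).symm⟩
    have hsub : Finset.Icc (0 : ℤ) (t : ℤ) ⊆ Finset.Icc lo hi := by
      intro a ha
      simp only [Finset.mem_Icc] at ha ⊢
      omega
    rw [← Finset.sum_subset hsub ?_]
    · have := lag_conv α z t
      simp only [Int.natCast_eq_zero]
      rw [← this]
      refine Finset.sum_nbij' (fun a : ℤ => a.toNat) (fun i : ℕ => (i : ℤ))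
        ?_ ?_ ?_ ?_ ?_
      · intro a ha
        simp only [Finset.mem_Icc] at ha
        simp only [Finset.mem_range]
        omega
      · intro i hi2
        simp only [Finset.mem_range] at hi2
        simp only [Finset.mem_Icc]
        omega
      · intro a ha
        simp only [Finset.mem_Icc] at ha
        simpa using Int.toNat_of_nonneg ha.1
      · intro i _
        simp
      · intro a ha
        simp only [Finset.mem_Icc] at ha
        obtain ⟨i, rfl⟩ : ∃ i : ℕ, a = (i : ℤ) := ⟨a.toNat, (Int.toNat_of_nonneg ha.1).symm⟩
        have hit : i ≤ t := by exact_mod_cast ha.2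
        simp only [Int.toNat_natCast]
        have c2 : ((t : ℤ) - (i : ℤ)) = ((t - i : ℕ) : ℤ) := by
          rw [Nat.cast_sub hit]
        have c3 : (((t : ℤ) - (i : ℤ) : ℤ) : ℝ) = ((t - i : ℕ) : ℝ) := by
          rw [c2]; simp
        rw [c3, c2]
        push_cast
        ring_nf
    · intro a ha hna
      simp only [Finset.mem_Icc] at ha
      simp only [Finset.mem_Icc, not_and, not_le] at hna
      rcases lt_or_ge a 0 with h0 | h0
      · rw [lagL_neg h0]; simp
      · rw [lagL_neg (show (t : ℤ) - a < 0 by specialize hna h0; omega)]; simp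

lemma neg_one_pow_mul_odd (a b : ℕ) (hb : Odd b) : (-1 : ℝ) ^ (a * b) = (-1) ^ a := by
  rw [pow_mul]
  rcases Nat.even_or_odd a with h | h
  · simp [h.neg_one_pow]
  · rw [h.neg_one_pow]
    exact hb.neg_one_pow

lemma tri_parity (N : ℕ) : (-1 : ℝ) ^ ((N + 1) * N / 2) = (-1) ^ ((N + 1) / 2) := by
  rcases Nat.even_or_odd N with ⟨a, rfl⟩ | ⟨a, rfl⟩
  · have h1 : (a + a + 1) * (a + a) = 2 * ((2 * a + 1) * a) := by ring
    have h2 : (a + a + 1) * (a + a) / 2 = (2 * a + 1) * a := by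
      rw [h1, Nat.mul_div_cancel_left _ (by norm_num)]
    have h3 : (a + a + 1) / 2 = a := by omega
    rw [h2, h3, mul_comm]
    exact neg_one_pow_mul_odd a (2 * a + 1) ⟨a, rfl⟩
  · have h1 : (2 * a + 1 + 1) * (2 * a + 1) = 2 * ((a + 1) * (2 * a + 1)) := by ring
    have h2 : (2 * a + 1 + 1) * (2 * a + 1) / 2 = (a + 1) * (2 * a + 1) := by
      rw [h1, Nat.mul_div_cancel_left _ (by norm_num)]
    have h3 : (2 * a + 1 + 1) / 2 = a + 1 := by omega
    rw [h2, h3]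
    exact neg_one_pow_mul_odd (a + 1) (2 * a + 1) ⟨a, rfl⟩

lemma det_antitriangular : ∀ (k : ℕ) (A : Matrix (Fin k) (Fin k) ℝ),
    (∀ i j : Fin k, k ≤ (i : ℕ) + (j : ℕ) → A i j = 0) →
    A.det = (-1 : ℝ) ^ (k * (k - 1) / 2) * ∏ i : Fin k, A i i.rev := by
  intro k
  induction k with
  | zero =>
    intro A _
    simp [Matrix.det_fin_zero]
  | succ k ih =>
    intro A h
    rw [Matrix.det_succ_row A (Fin.last k)]
    rw [Finset.sum_eq_single (0 : Fin (k + 1))]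
    · have hminor : ∀ i j : Fin k,
          k ≤ (i : ℕ) + (j : ℕ) → (A.submatrix (Fin.last k).succAbove (0 : Fin (k+1)).succAbove) i j = 0 := by
        intro i j hij
        simp only [Matrix.submatrix_apply, Fin.succAbove_last, Fin.succAbove_zero]
        apply h
        simp only [Fin.coe_castSucc, Fin.val_succ]
        omega
      rw [ih _ hminor]
      rw [Fin.prod_univ_castSucc (fun i : Fin (k+1) => A i i.rev)]
      have hrev : ∀ i : Fin k, (Fin.castSucc i).rev = (Fin.rev i).succ := fun i => Fin.rev_castSucc i
      have hprod : ∏ i : Fin k, A (Fin.castSucc i) (Fin.castSucc i).rev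
          = ∏ i : Fin k, (A.submatrix (Fin.last k).succAbove (0 : Fin (k+1)).succAbove) i i.rev := by
        refine Finset.prod_congr rfl fun i _ => ?_
        simp only [Matrix.submatrix_apply, Fin.succAbove_last, Fin.succAbove_zero, hrev]
      rw [hprod, Fin.rev_last]
      have hsign : ((-1 : ℝ)) ^ ((Fin.last k : ℕ) + ((0 : Fin (k+1)) : ℕ))
          * ((-1 : ℝ) ^ (k * (k - 1) / 2)) = (-1 : ℝ) ^ ((k + 1) * (k + 1 - 1) / 2) := by
        simp only [Fin.val_last, Fin.val_zero, add_zero]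
        rw [← pow_add]
        congr 1
        rw [Nat.triangle_succ]
        omega
      rw [← hsign]
      push_cast
      ring
    · intro j _ hj
      have : A (Fin.last k) j = 0 := by
        apply h
        simp only [Fin.val_last]
        have : 0 < (j : ℕ) := by
          rcases Nat.eq_zero_or_pos (j : ℕ) with h0 | h0
          · exact absurd (Fin.ext h0 : j = 0) hj
          · exact h0
        omega
      rw [this]
      ring
    · intro habs
      exact absurd (Finset.mem_univ _) habs

lemma lagL_zero_int (α : ℝ) (z : ℝ) : lagL (0 : ℤ) α z = 1 := by
  have : ((0 : ℕ) : ℤ) = (0 : ℤ) := by norm_num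
  rw [← this, lagL_coe]
  simp [genBinom_zero]

lemma entry_sum (N : ℕ) (μ z : ℝ) (i l : ℕ) (hi : i ≤ N) (hl : l ≤ N) :
    ∑ j ∈ Finset.range (N + 1),
      iteratedDeriv (i + j) (lagL (N : ℤ) (μ + 1)) z *
        iteratedDeriv (2 * N - (j + l)) (lagL (N : ℤ) (-μ - 2 * N - 1)) (-z)
      = if i = l then 1 else 0 := by
  set α : ℝ := μ + N + 1 with hα
  have hg : ∀ t : ℕ, iteratedDeriv t (lagL (N : ℤ) (μ + 1)) z
      = (-1 : ℝ) ^ t * lagL ((N : ℤ) - t) ((μ + 1) + t) z :=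
    fun t => congrFun (iteratedDeriv_lagL t (N : ℤ) (μ + 1)) z
  have hh : ∀ t : ℕ, iteratedDeriv t (lagL (N : ℤ) (-μ - 2 * N - 1)) (-z)
      = (-1 : ℝ) ^ t * lagL ((N : ℤ) - t) ((-μ - 2 * N - 1) + t) (-z) :=
    fun t => congrFun (iteratedDeriv_lagL t (N : ℤ) (-μ - 2 * N - 1)) (-z)
  have step1 : ∑ j ∈ Finset.range (N + 1),
      iteratedDeriv (i + j) (lagL (N : ℤ) (μ + 1)) z *
        iteratedDeriv (2 * N - (j + l)) (lagL (N : ℤ) (-μ - 2 * N - 1)) (-z)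
      = (-1 : ℝ) ^ (i + (2 * N - l)) * ∑ j ∈ Finset.range (N + 1),
          lagL ((N : ℤ) - i - j) (α - (((N : ℤ) - i - j : ℤ) : ℝ)) z *
            lagL (((l : ℤ) - i) - ((N : ℤ) - i - j))
              (-α - (((((l : ℤ) - i) - ((N : ℤ) - i - j)) : ℤ) : ℝ)) (-z) := by
    rw [Finset.mul_sum]
    refine Finset.sum_congr rfl fun j hj => ?_
    have hjN : j ≤ N := by simpa [Nat.lt_succ_iff] using Finset.mem_range.1 hj
    rw [hg, hh]
    have c1 : ((2 * N - (j + l) : ℕ) : ℤ) = 2 * N - j - l := by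
      rw [Nat.cast_sub (by omega)]; push_cast; ring
    have I1 : (N : ℤ) - ((i + j : ℕ) : ℤ) = (N : ℤ) - i - j := by push_cast; ring
    have I2 : (N : ℤ) - ((2 * N - (j + l) : ℕ) : ℤ)
        = ((l : ℤ) - i) - ((N : ℤ) - i - j) := by rw [c1]; push_cast; ring
    have P1 : (μ + 1) + ((i + j : ℕ) : ℝ) = α - (((N : ℤ) - i - j : ℤ) : ℝ) := by
      push_cast; rw [hα]; ring
    have P2 : (-μ - 2 * N - 1) + ((2 * N - (j + l) : ℕ) : ℝ)
        = -α - (((((l : ℤ) - i) - ((N : ℤ) - i - j)) : ℤ) : ℝ) := by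
      have : ((2 * N - (j + l) : ℕ) : ℝ) = 2 * N - j - l := by
        rw [Nat.cast_sub (by omega)]; push_cast; ring
      rw [this, hα]; push_cast; ring
    rw [I1, P1, I2, P2]
    have S : (-1 : ℝ) ^ (i + j) * (-1 : ℝ) ^ (2 * N - (j + l)) = (-1 : ℝ) ^ (i + (2 * N - l)) := by
      rw [← pow_add]
      congr 1
      omega
    rw [← S]
    ring
  rw [step1]
  have hconv := lag_conv_int α z (-(i : ℤ)) ((N : ℤ) - i) ((l : ℤ) - i) (by omega) (by omega)
  have reindex : ∑ j ∈ Finset.range (N + 1),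
      lagL ((N : ℤ) - i - j) (α - (((N : ℤ) - i - j : ℤ) : ℝ)) z *
        lagL (((l : ℤ) - i) - ((N : ℤ) - i - j))
          (-α - (((((l : ℤ) - i) - ((N : ℤ) - i - j)) : ℤ) : ℝ)) (-z)
      = ∑ a ∈ Finset.Icc (-(i : ℤ)) ((N : ℤ) - i),
          lagL a (α - (a : ℝ)) z *
            lagL (((l : ℤ) - i) - a) (-α - (((((l : ℤ) - i) - a) : ℤ) : ℝ)) (-z) := by
    refine Finset.sum_nbij' (fun j : ℕ => (N : ℤ) - i - j) (fun a : ℤ => ((N : ℤ) - i - a).toNat)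
      ?_ ?_ ?_ ?_ ?_
    · intro j hj
      simp only [Finset.mem_range] at hj
      simp only [Finset.mem_Icc]
      omega
    · intro a ha
      simp only [Finset.mem_Icc] at ha
      simp only [Finset.mem_range]
      omega
    · intro j hj
      simp only [Finset.mem_range] at hj
      beta_reduce
      omega
    · intro a ha
      simp only [Finset.mem_Icc] at ha
      beta_reduce
      omega
    · intro j _
      rfl
  rw [reindex, hconv]
  by_cases hil : i = l
  · subst hil
    rw [if_pos (by omega), if_pos rfl]
    have : i + (2 * N - i) = 2 * N := by omega
    rw [this, mul_one]
    exact (even_two_mul N).neg_one_pow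
  · rw [if_neg (by omega), if_neg hil]
    ring


/-- Generalised Laguerre polynomial
`T_{m,n}^{(μ)}(z) = det[(d/dz)^{j+k} L_{m+n}^{(μ+1)}(z)]_{j,k=0}^{n-1}`
(with `T_{m,0}^{(μ)} = 1`, the empty determinant). -/
def genLag (m : ℤ) (n : ℕ) (μ : ℝ) : ℝ → ℝ := fun z =>
  Matrix.det (Matrix.of fun j k : Fin n =>
    iteratedDeriv ((j : ℕ) + (k : ℕ)) (lagL (m + n) (μ + 1)) z)

/-- Wronskian `Wr(f_1, …, f_r)(z) = det[(d/dz)^{j-1} f_k(z)]`. -/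
def wronskian {r : ℕ} (f : Fin r → ℝ → ℝ) : ℝ → ℝ := fun z =>
  Matrix.det (Matrix.of fun j k : Fin r => iteratedDeriv (j : ℕ) (f k) z)

/-- The constant `c_{m,n} = (-1)^{n(2m+1+n)/2} ∏_{j=1}^n (j-1)!/(m+j)!`. -/
def cmn (m n : ℕ) : ℝ :=
  (-1 : ℝ) ^ (n * (2 * m + 1 + n) / 2) *
    ∏ j ∈ Finset.range n, (Nat.factorial j : ℝ) / (Nat.factorial (m + j + 1))

/-- `τ_{m,n}^{(μ)}(z) = det[(z d/dz)^{j+k} L_{m+n}^{(n+μ)}(z)]_{j,k=0}^{n-1}`. -/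
def tauP (m : ℤ) (n : ℕ) (μ : ℝ) : ℝ → ℝ := fun z =>
  Matrix.det (Matrix.of fun j k : Fin n =>
    ((fun (g : ℝ → ℝ) => fun t => t * deriv g t)^[(j : ℕ) + (k : ℕ)]
      (lagL (m + n) ((n : ℝ) + μ))) z)

/-- Hirota bilinear operator `D_z(f • g) = f' g - f g'`. -/
def hirota (f g : ℝ → ℝ) (z : ℝ) : ℝ := deriv f z * g z - f z * deriv g z

/-- Probabilists' Hermite polynomial `He_n` as a real function. -/
def He (n : ℕ) : ℝ → ℝ := fun z => Polynomial.aeval z (Polynomial.hermite n)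

/-- The fifth Painlevé equation (with `δ = -1/2`) for `w` with parameters `(a, b, c)`,
holding at the point `z`. -/
def PV (a b c : ℝ) (w : ℝ → ℝ) (z : ℝ) : Prop :=
  iteratedDeriv 2 w z =
    (1 / (2 * w z) + 1 / (w z - 1)) * (deriv w z) ^ 2
      - (1 / z) * deriv w z
      + (w z - 1) ^ 2 * (a * (w z) ^ 2 + b) / (z ^ 2 * w z)
      + c * w z / z
      - w z * (w z + 1) / (2 * (w z - 1))

/-- The Jimbo–Miwa–Okamoto `σ`-equation `S_V` with parameters `(ν₁, ν₂, ν₃)`,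
holding at the point `z`. -/
def SV (ν₁ ν₂ ν₃ : ℝ) (σ : ℝ → ℝ) (z : ℝ) : Prop :=
  (z * iteratedDeriv 2 σ z) ^ 2 =
    (2 * (deriv σ z) ^ 2 + (ν₁ + ν₂ + ν₃ - z) * deriv σ z + σ z) ^ 2
      - 4 * deriv σ z * (deriv σ z + ν₁) * (deriv σ z + ν₂) * (deriv σ z + ν₃)

/-- discrete symmetry of the generalised Laguerre polynomials. -/
theorem genLag_discrete_symmetry (m n : ℕ) (hn : 1 ≤ n) (μ : ℝ) (z : ℝ) :
    genLag (m : ℤ) n μ z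
      = (-1 : ℝ) ^ ((m + n + 1) / 2) *
          genLag ((n : ℤ) - 1) (m + 1) (-μ - 2 * n - 2 * m - 2) (-z) := by
  set N := m + n with hN
  have cast1 : (m : ℤ) + (n : ℕ) = ((N : ℕ) : ℤ) := by rw [hN]; push_cast; ring
  have cast2 : ((n : ℤ) - 1) + ((m + 1 : ℕ) : ℤ) = ((N : ℕ) : ℤ) := by rw [hN]; push_cast; ring
  have cast3 : -μ - 2 * (n : ℝ) - 2 * (m : ℝ) - 2 + 1 = -μ - 2 * (N : ℝ) - 1 := by
    rw [hN]; push_cast; ring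
  unfold genLag
  rw [cast1, cast2, cast3]
  -- the data
  set g : ℕ → ℝ := fun t => iteratedDeriv t (lagL ((N : ℕ) : ℤ) (μ + 1)) z with hgdef
  set h : ℕ → ℝ := fun t => iteratedDeriv t (lagL ((N : ℕ) : ℤ) (-μ - 2 * (N : ℝ) - 1)) (-z)
    with hhdef
  set A : Matrix (Fin (N + 1)) (Fin (N + 1)) ℝ := fun i j => g ((i : ℕ) + (j : ℕ)) with hAdef
  set B : Matrix (Fin (N + 1)) (Fin (N + 1)) ℝ :=
    fun i j => h (2 * N - ((i : ℕ) + (j : ℕ))) with hBdef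
  set C : Matrix (Fin (m + 1)) (Fin (m + 1)) ℝ := fun j k => h ((j : ℕ) + (k : ℕ)) with hCdef
  have hAB : A * B = 1 := by
    ext i l
    rw [Matrix.mul_apply, Matrix.one_apply]
    have conv1 : ∑ j : Fin (N + 1), A i j * B j l
        = ∑ j ∈ Finset.range (N + 1),
            (fun jv : ℕ => g ((i : ℕ) + jv) * h (2 * N - (jv + (l : ℕ)))) j := by
      rw [← Fin.sum_univ_eq_sum_range]
    rw [conv1]
    have := entry_sum N μ z (i : ℕ) (l : ℕ) (by omega) (by omega)
    rw [this]
    by_cases hil : i = l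
    · rw [if_pos hil, if_pos (by rw [hil])]
    · rw [if_neg hil, if_neg (fun hv => hil (Fin.ext hv))]
  -- block decomposition
  have hrs : n + (m + 1) = N + 1 := by omega
  set e : Fin n ⊕ Fin (m + 1) ≃ Fin (N + 1) := finSumFinEquiv.trans (finCongr hrs) with hedef
  have he1 : ∀ i : Fin n, ((e (Sum.inl i)) : ℕ) = (i : ℕ) := by
    intro i; simp [hedef, finSumFinEquiv_apply_left]
  have he2 : ∀ i : Fin (m + 1), ((e (Sum.inr i)) : ℕ) = n + (i : ℕ) := by
    intro i; simp [hedef, finSumFinEquiv_apply_right]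
  set A' := A.submatrix e e with hA'def
  set B' := B.submatrix e e with hB'def
  have hAB' : A' * B' = 1 := by
    rw [hA'def, hB'def, Matrix.submatrix_mul_equiv, hAB, Matrix.submatrix_one_equiv]
  rw [← Matrix.fromBlocks_toBlocks A', ← Matrix.fromBlocks_toBlocks B',
    Matrix.fromBlocks_multiply, ← Matrix.fromBlocks_one] at hAB'
  obtain ⟨h11, h12, h21, h22⟩ := Matrix.fromBlocks_inj.mp hAB'
  have h1 : A' * Matrix.fromBlocks 1 (B'.toBlocks₁₂) 0 (B'.toBlocks₂₂)
      = Matrix.fromBlocks (A'.toBlocks₁₁) 0 (A'.toBlocks₂₁) 1 := by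
    conv_lhs => rw [← Matrix.fromBlocks_toBlocks A']
    rw [Matrix.fromBlocks_multiply]
    simp only [Matrix.mul_one, Matrix.mul_zero, add_zero]
    rw [h12, h22]
  have key : A'.det * (B'.toBlocks₂₂).det = (A'.toBlocks₁₁).det := by
    have hd := congrArg Matrix.det h1
    rw [Matrix.det_mul, Matrix.det_fromBlocks_zero₂₁, Matrix.det_fromBlocks_zero₁₂,
      Matrix.det_one, Matrix.det_one, one_mul, mul_one] at hd
    exact hd
  have detA' : A'.det = A.det := Matrix.det_submatrix_equiv_self e A
  -- determinant of A
  have detA : A.det = (-1 : ℝ) ^ ((N + 1) / 2) := by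
    have h0 : ∀ i j : Fin (N + 1), N + 1 ≤ (i : ℕ) + (j : ℕ) → A i j = 0 := by
      intro i j hij
      show g ((i : ℕ) + (j : ℕ)) = 0
      rw [hgdef]
      beta_reduce
      rw [congrFun (iteratedDeriv_lagL ((i : ℕ) + (j : ℕ)) ((N : ℕ) : ℤ) (μ + 1)) z]
      rw [lagL_neg (show ((N : ℕ) : ℤ) - (((i : ℕ) + (j : ℕ) : ℕ) : ℤ) < 0 by push_cast; omega)]
      simp
    rw [det_antitriangular (N + 1) A h0]
    have hdiag : ∀ i : Fin (N + 1), A i i.rev = (-1 : ℝ) ^ N := by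
      intro i
      show g ((i : ℕ) + (i.rev : ℕ)) = _
      have hv : (i : ℕ) + (i.rev : ℕ) = N := by
        have := Fin.val_rev i
        omega
      rw [hv, hgdef]
      beta_reduce
      rw [congrFun (iteratedDeriv_lagL N ((N : ℕ) : ℤ) (μ + 1)) z]
      rw [show ((N : ℕ) : ℤ) - (N : ℕ) = 0 by omega]
      rw [lagL_zero_int, mul_one]
    rw [Finset.prod_congr rfl (fun i _ => hdiag i), Finset.prod_const]
    rw [Finset.card_univ, Fintype.card_fin]
    rw [← pow_mul, (Nat.even_mul_succ_self N).neg_one_pow, mul_one]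
    rw [show (N + 1) * (N + 1 - 1) / 2 = (N + 1) * N / 2 by norm_num]
    exact tri_parity N
  -- identify B' bottom-right block
  have detB22 : (B'.toBlocks₂₂).det = C.det := by
    have hB22 : B'.toBlocks₂₂ = C.submatrix (Fin.revPerm) (Fin.revPerm) := by
      ext i j
      show B (e (Sum.inr i)) (e (Sum.inr j)) = C i.rev j.rev
      show h (2 * N - (((e (Sum.inr i)) : ℕ) + ((e (Sum.inr j)) : ℕ)))
        = h ((i.rev : ℕ) + (j.rev : ℕ))
      rw [he2, he2]
      congr 1
      have hi := Fin.val_rev i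
      have hj := Fin.val_rev j
      omega
    rw [hB22, Matrix.det_submatrix_equiv_self]
  -- identify the LHS matrix
  have hL : (Matrix.of fun j k : Fin n =>
      iteratedDeriv ((j : ℕ) + (k : ℕ)) (lagL ((N : ℕ) : ℤ) (μ + 1)) z) = A'.toBlocks₁₁ := by
    ext j k
    show iteratedDeriv ((j : ℕ) + (k : ℕ)) (lagL ((N : ℕ) : ℤ) (μ + 1)) z
      = A (e (Sum.inl j)) (e (Sum.inl k))
    show _ = g (((e (Sum.inl j)) : ℕ) + ((e (Sum.inl k)) : ℕ))
    rw [he1, he1]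
  have hR : (Matrix.of fun j k : Fin (m + 1) =>
      iteratedDeriv ((j : ℕ) + (k : ℕ)) (lagL ((N : ℕ) : ℤ) (-μ - 2 * (N : ℝ) - 1)) (-z)) = C := by
    ext j k
    rfl
  rw [hL, hR, ← key, detA', detA, detB22]
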